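/- If g ∈ D^1_1 then g(x) ≤ C x^{−γ} for all x ∈ (0,1], where C depends only on a₁, A, χ* and γ. -/

import Mathlib

open Set Filter MeasureTheory Topology

noncomputable section

/-- `χ_ℓ(x) = min { x^ℓ, χ* }`. -/
def chi (χ : ℝ) (ℓ : ℕ) (x : ℝ) : ℝ := min (x ^ ℓ) χ

/-- `Lip_g(x) = limsup_{y → x, y ∈ s} |g x - g y| / |x - y|` (valued in `ℝ≥0∞`). -/
def lipWithin (g : ℝ → ℝ) (s : Set ℝ) (x : ℝ) : ENNReal :=
  Filter.limsup (fun y => ENNReal.ofReal (|g x - g y| / |x - y|)) (nhdsWithin x (s \ {x}))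

/-- The cone `D^k` of positive `(k-1)`-times continuously differentiable functions on `(0,1]`
with `|g^{(ℓ)}|/g ≤ a_ℓ/χ_ℓ` for `1 ≤ ℓ < k` and `Lip_{g^{(k-1)}}/g ≤ a_k/χ_k`.
For `k = 1` this is the set of positive Lipschitz functions with `Lip_g/g ≤ a₁/χ₁`. -/
def memD (χ : ℝ) (a : ℕ → ℝ) (k : ℕ) (g : ℝ → ℝ) : Prop :=
  (∀ x ∈ Set.Ioc (0:ℝ) 1, 0 < g x) ∧
  ContDiffOn ℝ (k - 1 : ℕ) g (Set.Ioc (0:ℝ) 1) ∧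
  (∀ ℓ : ℕ, 1 ≤ ℓ → ℓ < k → ∀ x ∈ Set.Ioc (0:ℝ) 1,
      |iteratedDerivWithin ℓ g (Set.Ioc (0:ℝ) 1) x| / g x ≤ a ℓ / chi χ ℓ x) ∧
  (∀ x ∈ Set.Ioc (0:ℝ) 1,
      lipWithin (iteratedDerivWithin (k - 1) g (Set.Ioc (0:ℝ) 1)) (Set.Ioc (0:ℝ) 1) x
        ≤ ENNReal.ofReal (a k * g x / chi χ k x))

/-- The cone `D^k_1` : members of `D^k` which are probability densities with
`∫₀ˣ g ≤ A x^{1-γ}`. -/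
def memD1 (χ γ A : ℝ) (a : ℕ → ℝ) (k : ℕ) (g : ℝ → ℝ) : Prop :=
  memD χ a k g ∧ (∫ s in (0:ℝ)..1, g s) = 1 ∧
  ∀ x ∈ Set.Ioc (0:ℝ) 1, (∫ s in (0:ℝ)..x, g s) ≤ A * x ^ (1 - γ)

end

/-- From a `lipWithin` bound, the difference quotient is eventually small. -/
lemma eventually_quot_lt {g : ℝ → ℝ} {s : Set ℝ} {t r : ℝ} {c : ENNReal}
    (h : lipWithin g s t ≤ c) (hr : c < ENNReal.ofReal r) :
    ∀ᶠ z in nhdsWithin t (s \ {t}), |g t - g z| / |t - z| < r := by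
  have hr0 : 0 < r := by
    by_contra hr0
    push_neg at hr0
    rw [ENNReal.ofReal_eq_zero.mpr hr0] at hr
    exact (not_lt_of_ge (zero_le : (0:ENNReal) ≤ c)) hr
  have hev := Filter.eventually_lt_of_limsup_lt (lt_of_le_of_lt h hr)
  filter_upwards [hev] with z hz
  exact (ENNReal.ofReal_lt_ofReal_iff hr0).mp hz

/-- THEOREM 7 (Remark 2.2): if `g ∈ D^1_1` then `g(x) ≤ C x^{-γ}`, with `C` depending
only on `a₁, A, χ*` and `γ`. -/
theorem pointwise_bound_D1 :
    ∀ γ χstar a₁ A : ℝ, γ ∈ Set.Ico (0:ℝ) 1 → χstar ∈ Set.Ioc (0:ℝ) 1 →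
      0 < a₁ → 0 < A →
      ∃ C : ℝ, 0 < C ∧
        ∀ g : ℝ → ℝ, memD1 χstar γ A (fun _ => a₁) 1 g →
          ∀ x ∈ Set.Ioc (0:ℝ) 1, g x ≤ C * x ^ (-γ) := by
  intro γ χstar a₁ A hγ hχ ha hA
  obtain ⟨hχ0, hχ1⟩ := hχ
  set E : ℝ := 2 * a₁ / χstar with hE_def
  have hE_pos : 0 < E := by positivity
  refine ⟨2 * A * Real.exp E, by positivity, ?_⟩
  intro g hg x hx
  obtain ⟨⟨hpos, hcd, _, hlip⟩, hint1, hintA⟩ := hg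
  obtain ⟨hx0, hx1⟩ := hx
  -- continuity of g on (0,1]
  have hcont : ContinuousOn g (Set.Ioc (0:ℝ) 1) := by
    have : ((1:ℕ) - 1 : ℕ) = 0 := rfl
    rw [this] at hcd
    exact (contDiffOn_zero.mp (by exact_mod_cast hcd))
  -- the lip bound, specialized
  have hlip' : ∀ t ∈ Set.Ioc (0:ℝ) 1,
      lipWithin g (Set.Ioc (0:ℝ) 1) t
        ≤ ENNReal.ofReal (a₁ * g t / min t χstar) := by
    intro t ht
    have := hlip t ht
    simpa [chi, iteratedDerivWithin_zero, pow_one] using this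
  set K : ℝ := 2 * a₁ / (x * χstar) with hK_def
  have hK_pos : 0 < K := by positivity
  -- Gronwall step : for y ∈ [x/2, x], g x ≤ g y * exp E
  have stepA : ∀ y ∈ Set.Icc (x/2) x, g x * Real.exp (-E) ≤ g y := by
    intro y hy
    have hy0 : 0 < y := lt_of_lt_of_le (by positivity) hy.1
    have hIcc_sub : Set.Icc y x ⊆ Set.Ioc (0:ℝ) 1 := by
      intro t ht
      exact ⟨lt_of_lt_of_le hy0 ht.1, le_trans ht.2 hx1⟩
    have key : g x ≤ g y * Real.exp (2 * K * (x - y)) := by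
      have hmain := image_le_of_liminf_slope_right_lt_deriv_boundary
        (f := g) (f' := fun t => K * g t) (a := y) (b := x)
        (B := fun t => g y * Real.exp (2 * K * (t - y)))
        (B' := fun t => 2 * K * (g y * Real.exp (2 * K * (t - y))))
        (hcont.mono hIcc_sub)
        ?_ ?_ ?_ ?_ (right_mem_Icc.mpr hy.2)
      · exact hmain
      · -- slope bound
        intro t ht r hr
        have ht' : t ∈ Set.Ioc (0:ℝ) 1 := hIcc_sub ⟨ht.1, le_of_lt ht.2⟩
        have hgt : 0 < g t := hpos t ht'
        have hmin : x * χstar / 2 ≤ min t χstar := by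
          have h1 : x * χstar / 2 ≤ t := by
            have hxx : x * χstar ≤ x := by nlinarith
            have hxy := hy.1
            linarith [ht.1]
          have h2 : x * χstar / 2 ≤ χstar := by nlinarith
          exact le_min h1 h2
        have hmin0 : 0 < min t χstar := lt_of_lt_of_le (by positivity) hmin
        have hbound : a₁ * g t / min t χstar ≤ K * g t := by
          calc a₁ * g t / min t χstar ≤ a₁ * g t / (x * χstar / 2) := by
                apply div_le_div_of_nonneg_left (by positivity) (by positivity) hmin
          _ = K * g t := by rw [hK_def]; field_simp
        have hr0 : 0 < r := lt_of_le_of_lt (by positivity) hr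
        have hcr : ENNReal.ofReal (a₁ * g t / min t χstar) < ENNReal.ofReal r := by
          rw [ENNReal.ofReal_lt_ofReal_iff hr0]
          exact lt_of_le_of_lt hbound hr
        have hev := eventually_quot_lt (hlip' t ht') hcr
        -- transfer to 𝓝[>] t
        have ht1 : t < 1 := lt_of_lt_of_le ht.2 hx1
        have hmem : ∀ᶠ z in 𝓝[>] t, z ∈ Set.Ioc (0:ℝ) 1 \ {t} := by
          have h1 : ∀ᶠ z in 𝓝[>] t, z ∈ Set.Iio 1 :=
            eventually_nhdsWithin_of_eventually_nhds (isOpen_Iio.eventually_mem ht1)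
          filter_upwards [h1, self_mem_nhdsWithin] with z hz1 hz2
          have hz : t < z := hz2
          exact ⟨⟨lt_trans ht'.1 hz, le_of_lt hz1⟩, ne_of_gt hz⟩
        have hev' : ∀ᶠ z in 𝓝 t, z ∈ Set.Ioc (0:ℝ) 1 \ {t} → |g t - g z| / |t - z| < r :=
          eventually_nhdsWithin_iff.mp hev
        have hfinal : ∀ᶠ z in 𝓝[>] t, slope g t z < r := by
          filter_upwards [hmem, hev'.filter_mono nhdsWithin_le_nhds, self_mem_nhdsWithin]
            with z hz1 hz2 hz3
          have hq := hz2 hz1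
          have hzt : t < z := hz3
          have : slope g t z ≤ |g t - g z| / |t - z| := by
            have h5 : |t - z| = z - t := by
              rw [abs_sub_comm]; exact abs_of_pos (by linarith)
            have h6 : g z - g t ≤ |g t - g z| := by
              rw [abs_sub_comm]; exact le_abs_self _
            rw [slope_def_field, h5]
            apply div_le_div_of_nonneg_right h6 (by linarith)
          exact lt_of_le_of_lt this hq
        exact hfinal.frequently
      · simp
      · -- HasDerivAt B
        intro t
        have h1 : HasDerivAt (fun t : ℝ => 2 * K * (t - y)) (2 * K) t := by
          simpa using ((hasDerivAt_id t).sub_const y).const_mul (2 * K)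
        have h2 := (h1.exp).const_mul (g y)
        convert h2 using 1
        · rfl
        · rfl
        · ring
      · -- strict inequality at contact points
        intro t ht heq
        have ht' : t ∈ Set.Ioc (0:ℝ) 1 := hIcc_sub ⟨ht.1, le_of_lt ht.2⟩
        have hgt : 0 < g t := hpos t ht'
        have heq' : g t = g y * Real.exp (2 * K * (t - y)) := heq
        show K * g t < 2 * K * (g y * Real.exp (2 * K * (t - y)))
        rw [← heq']
        nlinarith
    have hexp : 2 * K * (x - y) ≤ E := by
      have h1 : x - y ≤ x / 2 := by linarith [hy.1]
      have h2 : 2 * K * (x - y) ≤ 2 * K * (x / 2) := by nlinarith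
      have h3 : 2 * K * (x / 2) = 2 * a₁ / χstar := by
        rw [hK_def]; field_simp
      rw [hE_def]; linarith [h2, h3.le, h3.ge]
    have hgxE : g x ≤ g y * Real.exp E :=
      le_trans key (by
        have := Real.exp_le_exp.mpr hexp
        nlinarith [hpos y (hIcc_sub ⟨le_refl y, hy.2⟩), this])
    calc g x * Real.exp (-E) ≤ (g y * Real.exp E) * Real.exp (-E) :=
          mul_le_mul_of_nonneg_right hgxE (Real.exp_pos _).le
    _ = g y * Real.exp (E + -E) := by rw [Real.exp_add]; ring
    _ = g y := by simp
  -- integrability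
  have hInt : IntegrableOn g (Set.Ioc (0:ℝ) 1) := by
    by_contra h
    rw [intervalIntegral.integral_of_le zero_le_one, MeasureTheory.integral_undef h] at hint1
    exact one_ne_zero hint1.symm
  have hIntx : IntervalIntegrable g volume 0 x :=
    (intervalIntegrable_iff_integrableOn_Ioc_of_le (le_of_lt hx0)).mpr
      (hInt.mono_set (Set.Ioc_subset_Ioc_right hx1))
  have hIntx2 : IntervalIntegrable g volume (x/2) x :=
    (intervalIntegrable_iff_integrableOn_Ioc_of_le (by linarith)).mpr
      ((hInt.mono_set (Set.Ioc_subset_Ioc_right hx1)).mono_set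
        (Set.Ioc_subset_Ioc_left (by linarith)))
  -- lower bound on the integral
  have h1 : (x - x/2) * (g x * Real.exp (-E)) ≤ ∫ s in (x/2)..x, g s := by
    have h := intervalIntegral.integral_mono_on (μ := volume)
      (f := fun _ => g x * Real.exp (-E)) (g := g) (by linarith : x/2 ≤ x)
      intervalIntegrable_const hIntx2 (fun y hy => stepA y hy)
    rw [intervalIntegral.integral_const, smul_eq_mul] at h
    linarith [h]
  have h2 : ∫ s in (x/2)..x, g s ≤ ∫ s in (0:ℝ)..x, g s := by
    apply intervalIntegral.integral_mono_interval (by positivity) (by linarith) le_rfl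
    · filter_upwards [MeasureTheory.ae_restrict_mem measurableSet_Ioc] with y hy
      exact le_of_lt (hpos y ⟨hy.1, le_trans hy.2 hx1⟩)
    · exact hIntx
  have h3 := hintA x ⟨hx0, hx1⟩
  -- conclude
  have hxpow : x ^ (1 - γ) = x * x ^ (-γ) := by
    rw [show (1 : ℝ) - γ = 1 + (-γ) by ring, Real.rpow_add hx0, Real.rpow_one]
  have hchain : (x/2) * (g x * Real.exp (-E)) ≤ A * (x * x ^ (-γ)) := by
    calc (x/2) * (g x * Real.exp (-E)) = (x - x/2) * (g x * Real.exp (-E)) := by ring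
    _ ≤ ∫ s in (x/2)..x, g s := h1
    _ ≤ ∫ s in (0:ℝ)..x, g s := h2
    _ ≤ A * x ^ (1-γ) := h3
    _ = A * (x * x ^ (-γ)) := by rw [hxpow]
  have hexp_pos := Real.exp_pos E
  have hxg : 0 < x ^ (-γ) := Real.rpow_pos_of_pos hx0 _
  rw [Real.exp_neg] at hchain
  have h4 : g x * x ≤ 2 * A * Real.exp E * (x * x ^ (-γ)) := by
    have := mul_le_mul_of_nonneg_left hchain (le_of_lt (by positivity : (0:ℝ) < 2 * Real.exp E))
    calc g x * x = 2 * Real.exp E * ((x/2) * (g x * (Real.exp E)⁻¹)) := by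
          field_simp
    _ ≤ 2 * Real.exp E * (A * (x * x ^ (-γ))) := this
    _ = 2 * A * Real.exp E * (x * x ^ (-γ)) := by ring
  have := mul_le_mul_of_nonneg_right h4 (le_of_lt (inv_pos.mpr hx0))
  calc g x = g x * x * x⁻¹ := by field_simp
  _ ≤ 2 * A * Real.exp E * (x * x ^ (-γ)) * x⁻¹ := this
  _ = 2 * A * Real.exp E * x ^ (-γ) := by field_simp
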